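/- Fix δ > 0, γ > 0, π ∈ (0,1), r ∈ {1,2}, an r×r diagonal positive-definite matrix S, and V ∈ ℝ^{2×r} with VᵀV = I_r. Let G ∼ N(0,1) and let Y be an independent random sign with P(Y = +1) = π; set E_Y := e₁·1{Y=+1} − e₂·1{Y=−1} ∈ ℝ² and Δ_Y := δ·1{Y=+1} + 1·1{Y=−1}. Define η_δ(q, ρ, b) := E[( G + E_YᵀVSρ + (bY − Δ_Y)/q )₋²] − (1 − ‖ρ‖₂²)·γ for q > 0, ρ ∈ ℝ^r with ‖ρ‖₂ ≤ 1, and b ∈ ℝ, where (x)₋ := min{x, 0}. Then the function f(q) := inf_{b ∈ ℝ, ‖ρ‖₂ ≤ 1} η_δ(q, ρ, b) is strictly decreasing on (0, ∞). -/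

import Mathlib

open MeasureTheory ProbabilityTheory Matrix

/-- Negative part `(x)₋ = min(x, 0)`. -/
noncomputable def negp (x : ℝ) : ℝ := min x 0

/-- The standard Gaussian measure on `ℝ`. -/
noncomputable def stdGauss : Measure ℝ := gaussianReal 0 1

instance : IsProbabilityMeasure stdGauss :=
  inferInstanceAs (IsProbabilityMeasure (gaussianReal 0 1))

/-- The key scalar function `J(c) = E[(G + c)₋²]`. -/
noncomputable def Jfun (c : ℝ) : ℝ := ∫ g, negp (g + c) ^ 2 ∂stdGauss

lemma stdGauss_eq : stdGauss = volume.withDensity (gaussianPDF 0 1) := by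
  rw [stdGauss, gaussianReal_of_var_ne_zero 0 one_ne_zero]

lemma negp_sq_anti {x y : ℝ} (h : x ≤ y) : negp y ^ 2 ≤ negp x ^ 2 := by
  have h1 : min x 0 ≤ min y 0 := min_le_min h le_rfl
  have h2 : min y 0 ≤ 0 := min_le_right _ _
  unfold negp
  nlinarith

lemma integrable_sq_stdGauss : Integrable (fun g : ℝ => g ^ 2) stdGauss := by
  rw [stdGauss_eq,
    integrable_withDensity_iff (measurable_gaussianPDF 0 1)
      (Filter.Eventually.of_forall fun x => ENNReal.ofReal_lt_top)]
  have h1 : Integrable (fun x : ℝ => x ^ ((2 : ℕ) : ℝ) * Real.exp (-(2⁻¹ : ℝ) * x ^ 2))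
      volume := integrable_rpow_mul_exp_neg_mul_sq (by norm_num) (by norm_num)
  have h2 : Integrable
      (fun x : ℝ => (Real.sqrt (2 * Real.pi))⁻¹ *
        (x ^ ((2 : ℕ) : ℝ) * Real.exp (-(2⁻¹ : ℝ) * x ^ 2))) volume := h1.const_mul _
  refine h2.congr (Filter.Eventually.of_forall fun x => ?_)
  simp only [gaussianPDF]
  rw [ENNReal.toReal_ofReal (gaussianPDFReal_nonneg 0 1 x), gaussianPDFReal,
    Real.rpow_natCast]
  simp only [NNReal.coe_one, mul_one]
  rw [show -(x - 0) ^ 2 / 2 = -(2⁻¹ : ℝ) * x ^ 2 by ring]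
  ring

lemma integrable_negp_sq (c : ℝ) : Integrable (fun g : ℝ => negp (g + c) ^ 2) stdGauss := by
  have hcont : Continuous fun g : ℝ => negp (g + c) ^ 2 := by
    have : Continuous fun g : ℝ => min (g + c) 0 :=
      (continuous_id.add continuous_const).min continuous_const
    exact this.pow 2
  have hbint : Integrable (fun g : ℝ => 2 * g ^ 2 + 2 * c ^ 2) stdGauss := by
    exact (integrable_sq_stdGauss.const_mul 2).add (integrable_const (2 * c ^ 2))
  refine Integrable.mono' hbint hcont.aestronglyMeasurable
    (Filter.Eventually.of_forall fun g => ?_)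
  have h1 : negp (g + c) ^ 2 ≤ (g + c) ^ 2 := by
    unfold negp
    rcases le_or_gt (g + c) 0 with h | h
    · rw [min_eq_left h]
    · rw [min_eq_right h.le]
      nlinarith [sq_nonneg (g + c)]
  have h2 : (g + c) ^ 2 ≤ 2 * g ^ 2 + 2 * c ^ 2 := by nlinarith [sq_nonneg (g - c)]
  rw [Real.norm_eq_abs, abs_of_nonneg (sq_nonneg _)]
  linarith

lemma Jfun_nonneg (c : ℝ) : 0 ≤ Jfun c :=
  integral_nonneg fun g => sq_nonneg _

lemma stdGauss_Iic_pos (c : ℝ) : 0 < (stdGauss (Set.Iic c)).toReal := by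
  have h : 0 < stdGauss (Set.Iic c) := by
    rw [stdGauss_eq, withDensity_apply _ measurableSet_Iic,
      setLIntegral_pos_iff (measurable_gaussianPDF 0 1)]
    have hsupp : Function.support (gaussianPDF 0 1) = Set.univ := by
      ext x
      simp [Function.mem_support, (gaussianPDF_pos 0 one_ne_zero x).ne']
    rw [hsupp, Set.univ_inter, Real.volume_Iic]
    exact ENNReal.zero_lt_top
  exact ENNReal.toReal_pos h.ne' (measure_ne_top _ _)

lemma Jfun_lb {w : ℝ} (hw : w ≤ 0) :
    w ^ 2 * (stdGauss (Set.Iic 0)).toReal ≤ Jfun w := by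
  have h1 : ∫ g in Set.Iic (0 : ℝ), negp (g + w) ^ 2 ∂stdGauss ≤ Jfun w :=
    setIntegral_le_integral (integrable_negp_sq w)
      (Filter.Eventually.of_forall fun g => sq_nonneg _)
  have h2 : w ^ 2 * (stdGauss (Set.Iic 0)).toReal ≤
      ∫ g in Set.Iic (0 : ℝ), negp (g + w) ^ 2 ∂stdGauss := by
    refine setIntegral_ge_of_const_le_real measurableSet_Iic (measure_ne_top _ _)
      (fun g hg => ?_) (integrable_negp_sq w).integrableOn
    simp only [Set.mem_Iic] at hg
    have hgw : g + w ≤ 0 := by linarith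
    rw [negp, min_eq_left hgw]
    nlinarith [mul_nonneg (neg_nonneg.2 hg) (neg_nonneg.2 hw)]
  linarith

lemma Jfun_gap {B t x : ℝ} (ht : 0 < t) (hx : x ≤ B) :
    (t ^ 2 + 2 * t) * (stdGauss (Set.Iic (-B - t - 1))).toReal ≤ Jfun x - Jfun (x + t) := by
  have hint : Integrable (fun g : ℝ => negp (g + x) ^ 2 - negp (g + (x + t)) ^ 2) stdGauss :=
    (integrable_negp_sq x).sub (integrable_negp_sq (x + t))
  have hd : ∀ g : ℝ, 0 ≤ negp (g + x) ^ 2 - negp (g + (x + t)) ^ 2 := fun g =>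
    sub_nonneg.2 (negp_sq_anti (by linarith))
  have h1 : ∫ g in Set.Iic (-B - t - 1), (negp (g + x) ^ 2 - negp (g + (x + t)) ^ 2) ∂stdGauss ≤
      ∫ g, (negp (g + x) ^ 2 - negp (g + (x + t)) ^ 2) ∂stdGauss :=
    setIntegral_le_integral hint (Filter.Eventually.of_forall hd)
  have h2 : (t ^ 2 + 2 * t) * (stdGauss (Set.Iic (-B - t - 1))).toReal ≤
      ∫ g in Set.Iic (-B - t - 1), (negp (g + x) ^ 2 - negp (g + (x + t)) ^ 2) ∂stdGauss := by
    refine setIntegral_ge_of_const_le_real measurableSet_Iic (measure_ne_top _ _)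
      (fun g hg => ?_) hint.integrableOn
    simp only [Set.mem_Iic] at hg
    have hgx : g + x ≤ -t - 1 := by linarith
    have hgxt : g + (x + t) ≤ -1 := by linarith
    rw [negp, negp, min_eq_left (by linarith), min_eq_left (by linarith)]
    nlinarith [mul_nonneg ht.le (show (0 : ℝ) ≤ -t - 1 - (g + x) by linarith)]
  have h3 : Jfun x - Jfun (x + t) =
      ∫ g, (negp (g + x) ^ 2 - negp (g + (x + t)) ^ 2) ∂stdGauss :=
    (integral_sub (integrable_negp_sq x) (integrable_negp_sq (x + t))).symm
  linarith

lemma row_bound {r : ℕ} (s : Fin r → ℝ) (hs : ∀ i, 0 < s i)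
    (V : Matrix (Fin 2) (Fin r) ℝ) (hV : Vᵀ * V = 1)
    (ρ : Fin r → ℝ) (hρ : (∑ i, ρ i ^ 2) ≤ 1) (k : Fin 2) :
    |(V.mulVec ((Matrix.diagonal s).mulVec ρ)) k| ≤ ∑ i, s i := by
  have hcol : ∀ i, V k i ^ 2 ≤ 1 := by
    intro i
    have h1 : ∑ j : Fin 2, V j i * V j i = 1 := by
      have := congrFun (congrFun hV i) i
      simpa [Matrix.mul_apply, Matrix.transpose_apply, Matrix.one_apply] using this
    calc V k i ^ 2 = V k i * V k i := sq (V k i)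
      _ ≤ ∑ j : Fin 2, V j i * V j i :=
          Finset.single_le_sum (fun j _ => mul_self_nonneg (V j i)) (Finset.mem_univ k)
      _ = 1 := h1
  have hmv : V.mulVec ((Matrix.diagonal s).mulVec ρ) k = ∑ i, V k i * (s i * ρ i) := by
    have hin : (Matrix.diagonal s).mulVec ρ = fun i => s i * ρ i :=
      funext fun i => Matrix.mulVec_diagonal s ρ i
    rw [hin]
    simp [Matrix.mulVec, dotProduct]
  rw [hmv]
  calc |∑ i, V k i * (s i * ρ i)| ≤ ∑ i, |V k i * (s i * ρ i)| :=
        Finset.abs_sum_le_sum_abs _ _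
    _ ≤ ∑ i, s i := by
        refine Finset.sum_le_sum fun i _ => ?_
        have h2 : ρ i ^ 2 ≤ 1 :=
          le_trans (Finset.single_le_sum (fun j _ => sq_nonneg (ρ j)) (Finset.mem_univ i)) hρ
        have h3 := hcol i
        have h4 := hs i
        rw [abs_mul, abs_mul, abs_of_pos h4]
        have hV1 : |V k i| ≤ 1 := by nlinarith [abs_nonneg (V k i), sq_abs (V k i)]
        have hρ1 : |ρ i| ≤ 1 := by nlinarith [abs_nonneg (ρ i), sq_abs (ρ i)]
        have hstep : |V k i| * (s i * |ρ i|) ≤ 1 * (s i * 1) := by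
          refine mul_le_mul hV1 ?_ (by positivity) zero_le_one
          exact mul_le_mul_of_nonneg_left hρ1 h4.le
        linarith

set_option maxHeartbeats 1000000 in
theorem stmt14 (δ γ pp : ℝ) (hδ : 0 < δ) (hγ : 0 < γ) (hpp : 0 < pp) (hpp1 : pp < 1)
    (r : ℕ) (hr : r = 1 ∨ r = 2)
    (s : Fin r → ℝ) (hs : ∀ i, 0 < s i)
    (V : Matrix (Fin 2) (Fin r) ℝ) (hV : Vᵀ * V = 1)
    (η : ℝ → (Fin r → ℝ) → ℝ → ℝ)
    (hη : ∀ (q : ℝ) (ρ : Fin r → ℝ) (b : ℝ), η q ρ b =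
      pp * ∫ g, negp (g + (V.mulVec ((Matrix.diagonal s).mulVec ρ)) 0 + (b - δ) / q) ^ 2 ∂stdGauss
      + (1 - pp) * ∫ g, negp (g - (V.mulVec ((Matrix.diagonal s).mulVec ρ)) 1 + (-b - 1) / q) ^ 2 ∂stdGauss
      - (1 - ∑ i, ρ i ^ 2) * γ)
    (f : ℝ → ℝ)
    (hf : ∀ q, f q = sInf {v : ℝ | ∃ (ρ : Fin r → ℝ) (b : ℝ), (∑ i, ρ i ^ 2) ≤ 1 ∧ v = η q ρ b}) :
    StrictAntiOn f (Set.Ioi 0) := by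
  -- rewrite η using Jfun
  have hη' : ∀ (q : ℝ) (ρ : Fin r → ℝ) (b : ℝ), η q ρ b =
      pp * Jfun ((V.mulVec ((Matrix.diagonal s).mulVec ρ)) 0 + (b - δ) / q)
      + (1 - pp) * Jfun (-(V.mulVec ((Matrix.diagonal s).mulVec ρ)) 1 + (-b - 1) / q)
      - (1 - ∑ i, ρ i ^ 2) * γ := by
    intro q ρ b
    have e1 : ∀ X c : ℝ, (∫ g, negp (g + X + c) ^ 2 ∂stdGauss) = Jfun (X + c) := by
      intro X c
      simp_rw [Jfun, add_assoc]
    have e2 : ∀ X c : ℝ, (∫ g, negp (g - X + c) ^ 2 ∂stdGauss) = Jfun (-X + c) := by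
      intro X c
      simp_rw [Jfun, sub_eq_add_neg, add_assoc]
    rw [hη, e1, e2]
  intro q1 hq1 q2 hq2 h12
  simp only [Set.mem_Ioi] at hq1 hq2
  set S : ℝ → Set ℝ :=
    fun q => {v : ℝ | ∃ (ρ : Fin r → ℝ) (b : ℝ), (∑ i, ρ i ^ 2) ≤ 1 ∧ v = η q ρ b} with hS
  have hmem : ∀ q, η q 0 0 ∈ S q := fun q => ⟨0, 0, by simp, rfl⟩
  have hbdd : ∀ q, BddBelow (S q) := by
    intro q
    refine ⟨-γ, fun v hv => ?_⟩
    obtain ⟨ρ, b, hρ, rfl⟩ := hv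
    rw [hη']
    have hsum : (0 : ℝ) ≤ ∑ i, ρ i ^ 2 := Finset.sum_nonneg fun i _ => sq_nonneg _
    have h1 : 0 ≤ pp * Jfun ((V.mulVec ((Matrix.diagonal s).mulVec ρ)) 0 + (b - δ) / q) :=
      mul_nonneg hpp.le (Jfun_nonneg _)
    have h2 : 0 ≤ (1 - pp) * Jfun (-(V.mulVec ((Matrix.diagonal s).mulVec ρ)) 1 + (-b - 1) / q) :=
      mul_nonneg (by linarith) (Jfun_nonneg _)
    have h3 : 0 ≤ (∑ i, ρ i ^ 2) * γ := mul_nonneg hsum hγ.le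
    nlinarith [h1, h2, h3]
  -- constants
  set Sb : ℝ := ∑ i, s i with hSbdef
  have hSb : 0 ≤ Sb := Finset.sum_nonneg fun i _ => (hs i).le
  set K : ℝ := f q1 + 1 + γ with hKdef
  set m0 : ℝ := (stdGauss (Set.Iic 0)).toReal with hm0def
  have hm0 : 0 < m0 := stdGauss_Iic_pos 0
  set K' : ℝ := max (K / (1 - pp)) 0 with hK'def
  have hK'0 : 0 ≤ K' := le_max_right _ _
  set W : ℝ := Real.sqrt (K' / m0) + 1 with hWdef
  have hW1 : 1 ≤ W := by
    rw [hWdef]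
    have := Real.sqrt_nonneg (K' / m0)
    linarith
  have hWsq : K' < W ^ 2 * m0 := by
    rw [hWdef]
    have h1 : Real.sqrt (K' / m0) ^ 2 = K' / m0 := Real.sq_sqrt (by positivity)
    have h2 : K' / m0 * m0 = K' := div_mul_cancel₀ _ hm0.ne'
    nlinarith [Real.sqrt_nonneg (K' / m0)]
  set B : ℝ := W + 2 * Sb with hBdef
  set t : ℝ := (1 + δ) / q1 - (1 + δ) / q2 with htdef
  have ht : 0 < t := by
    have := div_lt_div_of_pos_left (by linarith : (0:ℝ) < 1 + δ) hq1 h12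
    simp only [htdef]
    linarith
  set mB : ℝ := (stdGauss (Set.Iic (-B - t - 1))).toReal with hmBdef
  have hmB : 0 < mB := stdGauss_Iic_pos _
  set gap : ℝ := (t ^ 2 + 2 * t) * mB with hgapdef
  have hgap : 0 < gap := by
    have : 0 < t ^ 2 + 2 * t := by nlinarith
    exact mul_pos this hmB
  set ε : ℝ := min 1 (pp * gap / 2) with hεdef
  have hε : 0 < ε := lt_min one_pos (by positivity)
  have hε1 : ε ≤ 1 := min_le_left _ _
  have hε2 : ε ≤ pp * gap / 2 := min_le_right _ _
  -- pick near-optimal point at q1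
  have hex : ∃ a ∈ S q1, a < f q1 + ε := by
    by_contra hcon
    push_neg at hcon
    have : f q1 + ε ≤ f q1 := by
      have h := le_csInf ⟨_, hmem q1⟩ hcon
      rw [hf q1] at *
      exact h
    linarith
  obtain ⟨v, hvS, hvlt⟩ := hex
  obtain ⟨ρ, b, hρ, rfl⟩ := hvS
  set A0 : ℝ := (V.mulVec ((Matrix.diagonal s).mulVec ρ)) 0 with hA0def
  set A1 : ℝ := (V.mulVec ((Matrix.diagonal s).mulVec ρ)) 1 with hA1def
  have hA0 : |A0| ≤ Sb := row_bound s hs V hV ρ hρ 0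
  have hA1 : |A1| ≤ Sb := row_bound s hs V hV ρ hρ 1
  set u : ℝ := (b - δ) / q1 with hudef
  set w : ℝ := (-b - 1) / q1 with hwdef
  have huw : u + w = -((1 + δ) / q1) := by
    rw [hudef, hwdef, ← add_div]
    ring_nf
  have hvη : η q1 ρ b = pp * Jfun (A0 + u) + (1 - pp) * Jfun (-A1 + w)
      - (1 - ∑ i, ρ i ^ 2) * γ := hη' q1 ρ b
  have hsum0 : (0 : ℝ) ≤ ∑ i, ρ i ^ 2 := Finset.sum_nonneg fun i _ => sq_nonneg _
  -- bound the second shift from below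
  have hJ2 : (1 - pp) * Jfun (-A1 + w) ≤ K := by
    have h1 : (1 - ∑ i, ρ i ^ 2) * γ ≤ γ := by nlinarith [mul_nonneg hsum0 hγ.le]
    have h2 : 0 ≤ pp * Jfun (A0 + u) := mul_nonneg hpp.le (Jfun_nonneg _)
    have h3 : η q1 ρ b < f q1 + 1 := by linarith
    rw [hvη] at h3
    rw [hKdef]
    linarith
  have hwlb : -W ≤ -A1 + w := by
    by_contra hcon
    push_neg at hcon
    have hc0 : -A1 + w ≤ 0 := by linarith
    have h1 : Jfun (-A1 + w) ≤ K' := by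
      have h2 : Jfun (-A1 + w) ≤ K / (1 - pp) := by
        rw [le_div_iff₀ (by linarith : (0:ℝ) < 1 - pp)]
        linarith [hJ2]
      exact le_trans h2 (le_max_left _ _)
    have h3 : W ^ 2 ≤ (-A1 + w) ^ 2 := by
      nlinarith [mul_nonneg (show (0:ℝ) ≤ -(-A1 + w) - W by linarith)
        (show (0:ℝ) ≤ -(-A1 + w) + W by linarith)]
    have h4 : (-A1 + w) ^ 2 * m0 ≤ Jfun (-A1 + w) := Jfun_lb hc0
    linarith [mul_le_mul_of_nonneg_right h3 hm0.le]
  have hwlb' : -W - Sb ≤ w := by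
    linarith [(abs_le.1 hA1).1, hwlb]
  have hub : u ≤ W + Sb := by
    have h1 : 0 < (1 + δ) / q1 := by positivity
    linarith [huw, hwlb']
  have hxB : A0 + u ≤ B := by
    have := (abs_le.1 hA0).2
    rw [hBdef]
    linarith
  -- construct the competitor at q2
  set b2 : ℝ := q2 * (u + t) + δ with hb2def
  have he1 : (b2 - δ) / q2 = u + t := by
    rw [hb2def]
    field_simp
    ring
  have he2 : (-b2 - 1) / q2 = w := by
    rw [hb2def, htdef, hudef, hwdef]
    field_simp
    ring
  have hval : η q2 ρ b2 = pp * Jfun ((A0 + u) + t) + (1 - pp) * Jfun (-A1 + w)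
      - (1 - ∑ i, ρ i ^ 2) * γ := by
    rw [hη' q2 ρ b2, he1, he2, ← hA0def, ← hA1def, add_assoc]
  have hgaple : gap ≤ Jfun (A0 + u) - Jfun ((A0 + u) + t) := Jfun_gap ht hxB
  have hcomp : η q2 ρ b2 ≤ η q1 ρ b - pp * gap := by
    rw [hval, hvη]
    linarith [mul_le_mul_of_nonneg_left hgaple hpp.le]
  have hfq2 : f q2 ≤ η q2 ρ b2 := by
    rw [hf q2]
    exact csInf_le (hbdd q2) ⟨ρ, b2, hρ, rfl⟩
  calc f q2 ≤ η q2 ρ b2 := hfq2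
    _ ≤ η q1 ρ b - pp * gap := hcomp
    _ < f q1 + ε - pp * gap := by linarith
    _ ≤ f q1 - pp * gap / 2 := by linarith
    _ < f q1 := by linarith [mul_pos hpp hgap]
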